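/- If f : [a,b] → ℝ has absolutely continuous (n-1)st derivative with f^{(n)} ∈ L²([a,b]), then with φ_n(x) = ((b-a)/2)^n · 2^n(n!)²/(2n)! · P_n((2x-a-b)/(b-a)), the quadrature error satisfies |E_n(f)| ≤ ‖f^{(n)}‖₂ n! (b-a)^{n+1/2} / ((2n+1)^{1/2} (2n)!). -/

import Mathlib

open MeasureTheory Polynomial intervalIntegral

/-- The degree-`n` Legendre polynomial, via Rodrigues' formula. -/
noncomputable def legendre (n : ℕ) : Polynomial ℝ :=
  Polynomial.C (1 / (2 ^ n * (n.factorial : ℝ))) *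
    Polynomial.derivative^[n] ((Polynomial.X ^ 2 - 1) ^ n)


noncomputable def u (n : ℕ) : ℝ[X] := (X ^ 2 - 1) ^ n

lemma eval_boundary {n k : ℕ} (hk : k < n) {c : ℝ} (hc : c ^ 2 = 1) :
    (derivative^[k] (u n)).eval c = 0 := by
  obtain ⟨r, hr⟩ := Polynomial.pow_sub_dvd_iterate_derivative_pow (X ^ 2 - 1 : ℝ[X]) n k
  obtain ⟨s, hs⟩ := (dvd_pow_self (X ^ 2 - 1 : ℝ[X]) (by omega : n - k ≠ 0)).trans ⟨r, hr⟩
  rw [u, hs, eval_mul, eval_sub, eval_pow, eval_one, eval_X, hc, sub_self, zero_mul]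

lemma base_natDegree (n : ℕ) : (u n).natDegree = 2 * n := by
  have h1 : ((X:ℝ[X]) ^ 2 - 1).natDegree = 2 := by
    have := natDegree_X_pow_sub_C (n := 2) (R := ℝ) (r := 1)
    simpa using this
  rw [u, natDegree_pow, h1, mul_comm]

lemma base_monic (n : ℕ) : (u n).Monic := by
  have h1 : ((X:ℝ[X]) ^ 2 - 1).Monic := by
    have := monic_X_pow_sub_C (R := ℝ) (1:ℝ) (n := 2) (by norm_num)
    simpa using this
  exact h1.pow n

lemma top_deriv (n : ℕ) : derivative^[2 * n] (u n) = C ((2 * n).factorial : ℝ) := by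
  have hdeg : (derivative^[2 * n] (u n)).natDegree = 0 := by
    have h := natDegree_iterate_derivative (u n) (2 * n)
    rw [base_natDegree] at h; omega
  rw [eq_C_of_natDegree_eq_zero hdeg, coeff_iterate_derivative]
  have h1 : (u n).coeff (0 + 2 * n) = 1 := by
    have h2 := (base_monic n).coeff_natDegree
    rw [base_natDegree] at h2; simpa using h2
  rw [h1, zero_add, Nat.descFactorial_self]; simp

lemma poly_ibp (p q : ℝ[X]) (a b : ℝ) :
    ∫ x in a..b, p.eval x * (derivative q).eval x =
      p.eval b * q.eval b - p.eval a * q.eval a -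
        ∫ x in a..b, (derivative p).eval x * q.eval x :=
  integral_mul_deriv_eq_deriv_mul (fun x _ => p.hasDerivAt x) (fun x _ => q.hasDerivAt x)
    ((derivative p).continuous_aeval.intervalIntegrable _ _)
    ((derivative q).continuous_aeval.intervalIntegrable _ _)

lemma ibp_iter (n : ℕ) : ∀ k, k ≤ n →
    (∫ x in (-1:ℝ)..1,
        (derivative^[n + k] (u n)).eval x * (derivative^[n - k] (u n)).eval x)
      = (-1) ^ k * ∫ x in (-1:ℝ)..1, ((derivative^[n] (u n)).eval x) ^ 2 := by
  intro k
  induction k with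
  | zero => intro _; simp [sq]
  | succ k ih =>
    intro hk
    have h2 : n - (k + 1) + 1 = n - k := by omega
    have e1 : derivative (derivative^[n - (k + 1)] (u n)) = derivative^[n - k] (u n) := by
      rw [← h2]; exact (Function.iterate_succ_apply' _ _ _).symm
    have e2 : derivative (derivative^[n + k] (u n)) = derivative^[n + (k + 1)] (u n) :=
      (Function.iterate_succ_apply' derivative (n + k) (u n)).symm
    have b1 : (derivative^[n - (k + 1)] (u n)).eval 1 = 0 :=
      eval_boundary (by omega) (by norm_num)
    have b2 : (derivative^[n - (k + 1)] (u n)).eval (-1) = 0 :=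
      eval_boundary (by omega) (by norm_num)
    have key := poly_ibp (derivative^[n - (k + 1)] (u n)) (derivative^[n + k] (u n)) (-1) 1
    rw [e1, e2, b1, b2, zero_mul, zero_mul, sub_zero, zero_sub] at key
    have ihh := ih (by omega)
    calc (∫ x in (-1:ℝ)..1,
        (derivative^[n + (k+1)] (u n)).eval x * (derivative^[n - (k+1)] (u n)).eval x)
        = ∫ x in (-1:ℝ)..1,
        (derivative^[n - (k+1)] (u n)).eval x * (derivative^[n + (k+1)] (u n)).eval x := by
          simp_rw [mul_comm]
      _ = -∫ x in (-1:ℝ)..1,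
        (derivative^[n - k] (u n)).eval x * (derivative^[n + k] (u n)).eval x := key
      _ = -∫ x in (-1:ℝ)..1,
        (derivative^[n + k] (u n)).eval x * (derivative^[n - k] (u n)).eval x := by
          simp_rw [mul_comm]
      _ = (-1) ^ (k+1) * ∫ x in (-1:ℝ)..1, ((derivative^[n] (u n)).eval x) ^ 2 := by
          rw [ihh]; ring


lemma integral_pow_base : ∀ n : ℕ, (∫ x in (-1:ℝ)..1, (x^2-1)^n)
    = (-1)^n * 2^(2*n+1) * (n.factorial:ℝ)^2 / ((2*n+1).factorial : ℝ) := by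
  intro n
  induction n with
  | zero => norm_num
  | succ n ih =>
    have hder : ∀ x : ℝ, HasDerivAt (fun x : ℝ => x * (x^2-1)^(n+1))
        ((2*(n:ℝ)+3) * (x^2-1)^(n+1) + (2*((n:ℝ)+1)) * (x^2-1)^n) x := by
      intro x
      have h1 : HasDerivAt (fun x : ℝ => x^2-1) (2*x) x := by
        simpa using ((hasDerivAt_pow 2 x).sub_const 1)
      have h2 := h1.pow (n+1)
      have h3 := (hasDerivAt_id x).mul h2
      convert h3 using 1
      · rfl
      · rfl
      · ext y; simp
      simp only [Nat.add_sub_cancel, id_eq, Pi.pow_apply]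
      push_cast
      ring
    have hint : (∫ x in (-1:ℝ)..1,
        ((2*(n:ℝ)+3) * (x^2-1)^(n+1) + (2*((n:ℝ)+1)) * (x^2-1)^n)) = 0 := by
      rw [intervalIntegral.integral_eq_sub_of_hasDerivAt (fun x _ => hder x)
        (Continuous.intervalIntegrable (by continuity) _ _)]
      norm_num
    rw [intervalIntegral.integral_add
          ((Continuous.intervalIntegrable (by continuity) _ _))
          ((Continuous.intervalIntegrable (by continuity) _ _)),
        intervalIntegral.integral_const_mul, intervalIntegral.integral_const_mul, ih] at hint
    have h3 : (2*(n:ℝ)+3) ≠ 0 := by positivity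
    have hI : (∫ x in (-1:ℝ)..1, (x^2-1)^(n+1))
        = -(2*((n:ℝ)+1)) / (2*(n:ℝ)+3) *
          ((-1)^n * 2^(2*n+1) * (n.factorial:ℝ)^2 / ((2*n+1).factorial : ℝ)) := by
      field_simp at hint ⊢
      linarith [hint]
    rw [hI]
    have hf1 : ((2*(n+1)+1).factorial : ℝ)
        = (2*(n:ℝ)+3) * ((2*(n:ℝ)+2) * ((2*n+1).factorial : ℝ)) := by
      have : 2*(n+1)+1 = (2*n+1) + 1 + 1 := by omega
      rw [this, Nat.factorial_succ, Nat.factorial_succ]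
      push_cast; ring
    have hf2 : ((n+1).factorial : ℝ) = ((n:ℝ)+1) * (n.factorial : ℝ) := by
      rw [Nat.factorial_succ]; push_cast; ring
    have hfne : ((2*n+1).factorial : ℝ) ≠ 0 := by positivity
    have hnne : (n.factorial : ℝ) ≠ 0 := by positivity
    rw [hf1, hf2]
    field_simp
    ring

lemma legendre_norm (n : ℕ) :
    (∫ x in (-1:ℝ)..1, ((legendre n).eval x) ^ 2) = 2 / (2 * (n:ℝ) + 1) := by
  have key := ibp_iter n n le_rfl
  rw [← two_mul, top_deriv, Nat.sub_self] at key
  simp only [Function.iterate_zero, id_eq, eval_C] at key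
  have hu : ∀ x : ℝ, (u n).eval x = (x^2-1)^n := by
    intro x; simp [u]
  simp only [hu] at key
  rw [intervalIntegral.integral_const_mul, integral_pow_base n] at key
  have h2 : ((-1:ℝ))^n * ((-1:ℝ))^n = 1 := by
    rw [← pow_add, ← two_mul, pow_mul]; norm_num
  have h1 : (∫ x in (-1:ℝ)..1, ((derivative^[n] (u n)).eval x) ^ 2)
      = 2 ^ (2*n+1) * (n.factorial:ℝ)^2 * (2*n).factorial / ((2*n+1).factorial : ℝ) := by
    calc (∫ x in (-1:ℝ)..1, ((derivative^[n] (u n)).eval x) ^ 2)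
        = (-1:ℝ)^n * ((-1:ℝ)^n * ∫ x in (-1:ℝ)..1, ((derivative^[n] (u n)).eval x) ^ 2) := by
          rw [← mul_assoc, h2, one_mul]
      _ = (-1:ℝ)^n * ((2*n).factorial *
            ((-1)^n * 2^(2*n+1) * (n.factorial:ℝ)^2 / ((2*n+1).factorial : ℝ))) := by rw [← key]
      _ = ((-1:ℝ)^n * (-1:ℝ)^n) *
            (2 ^ (2*n+1) * (n.factorial:ℝ)^2 * (2*n).factorial / ((2*n+1).factorial : ℝ)) := by
          ring
      _ = _ := by rw [h2, one_mul]
  have heval : ∀ x : ℝ, ((legendre n).eval x) ^ 2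
      = (1 / (2 ^ n * (n.factorial : ℝ)))^2 * ((derivative^[n] (u n)).eval x) ^ 2 := by
    intro x; simp [legendre, u]; ring
  simp only [heval]
  rw [intervalIntegral.integral_const_mul, h1]
  have hfact : ((2*n+1).factorial : ℝ) = (2*(n:ℝ)+1) * (2*n).factorial := by
    rw [Nat.factorial_succ]; push_cast; ring
  have h3 : ((2*n).factorial : ℝ) ≠ 0 := by positivity
  have h4 : (2*(n:ℝ)+1) ≠ 0 := by positivity
  have h5 : (2:ℝ)^n ≠ 0 := by positivity
  have h6 : (n.factorial : ℝ) ≠ 0 := by positivity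
  rw [hfact]
  field_simp
  ring

lemma cauchy_schwarz_interval {a b : ℝ} (hab : a ≤ b) {g φ : ℝ → ℝ}
    (hg : IntervalIntegrable g volume a b)
    (hg2 : IntervalIntegrable (fun x => (g x) ^ 2) volume a b)
    (hφ : Continuous φ) :
    |∫ x in a..b, g x * φ x|
      ≤ (∫ x in a..b, (g x) ^ 2) ^ ((1:ℝ)/2) * (∫ x in a..b, (φ x) ^ 2) ^ ((1:ℝ)/2) := by
  set μ := volume.restrict (Set.Ioc a b) with hμ
  have hgm : AEStronglyMeasurable g μ := hg.1.aestronglyMeasurable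
  have hgL2 : MemLp g 2 μ := (memLp_two_iff_integrable_sq hgm).2 hg2.1
  have hφL2 : MemLp φ 2 μ :=
    (memLp_two_iff_integrable_sq hφ.aestronglyMeasurable).2
      ((hφ.pow 2).integrableOn_Ioc)
  have h2 : (2:ℝ).HolderConjugate 2 := Real.HolderConjugate.two_two
  have hofReal : ENNReal.ofReal (2:ℝ) = 2 := by
    rw [ENNReal.ofReal_ofNat]
  have key := integral_mul_norm_le_Lp_mul_Lq (μ := μ) h2 (hofReal ▸ hgL2) (hofReal ▸ hφL2)
  have hrpow : ∀ y : ℝ, ‖y‖ ^ (2:ℝ) = y ^ 2 := by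
    intro y
    rw [show ((2:ℝ)) = ((2:ℕ):ℝ) by norm_num, Real.rpow_natCast, Real.norm_eq_abs, sq_abs]
  simp only [hrpow] at key
  have h3 : (∫ x, ‖g x‖ * ‖φ x‖ ∂μ) = ∫ x, ‖g x * φ x‖ ∂μ := by
    congr 1; funext x; rw [norm_mul]
  rw [h3] at key
  calc |∫ x in a..b, g x * φ x| = ‖∫ x, g x * φ x ∂μ‖ := by
        rw [intervalIntegral.integral_of_le hab, Real.norm_eq_abs]
    _ ≤ ∫ x, ‖g x * φ x‖ ∂μ := norm_integral_le_integral_norm _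
    _ ≤ (∫ x, (g x) ^ 2 ∂μ) ^ ((1:ℝ)/2) * (∫ x, (φ x) ^ 2 ∂μ) ^ ((1:ℝ)/2) := key
    _ = (∫ x in a..b, (g x) ^ 2) ^ ((1:ℝ)/2) * (∫ x in a..b, (φ x) ^ 2) ^ ((1:ℝ)/2) := by
        rw [intervalIntegral.integral_of_le hab,
          intervalIntegral.integral_of_le hab]

theorem corrected_trapezoid_error_legendre
    (a b : ℝ) (hab : a < b) (n : ℕ) (hn : 1 ≤ n)
    (f g : ℝ → ℝ)
    (hf : ContDiffOn ℝ (n - 1 : ℕ) f (Set.Icc a b))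
    (hg : IntervalIntegrable g volume a b)
    (hFTC : ∀ x ∈ Set.Icc a b,
      iteratedDeriv (n - 1) f x = iteratedDeriv (n - 1) f a + ∫ t in a..x, g t)
    (hg2 : IntervalIntegrable (fun x => (g x) ^ 2) volume a b) :
    |((-1 : ℝ) ^ n / n.factorial) *
        ∫ x in a..b, g x *
          (((b - a) / 2) ^ n * (2 ^ n * (n.factorial : ℝ) ^ 2 / ((2 * n).factorial : ℝ)) *
            (legendre n).eval ((2 * x - a - b) / (b - a)))|
      ≤ (∫ x in a..b, (g x) ^ 2) ^ ((1 : ℝ) / 2) * (n.factorial : ℝ) *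
          (b - a) ^ ((n : ℝ) + 1 / 2) /
          ((2 * (n : ℝ) + 1) ^ ((1 : ℝ) / 2) * ((2 * n).factorial : ℝ)) := by
  have hba : (0:ℝ) < b - a := sub_pos.2 hab
  set c : ℝ := ((b - a) / 2) ^ n * (2 ^ n * (n.factorial : ℝ) ^ 2 / ((2 * n).factorial : ℝ))
    with hc
  have hfac2 : (0:ℝ) < ((2 * n).factorial : ℝ) := by positivity
  have hfac : (0:ℝ) < (n.factorial : ℝ) := by positivity
  have hcpos : 0 < c := by
    apply mul_pos (pow_pos (by linarith) n); positivity
  have hφcont : Continuous (fun x : ℝ =>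
      c * (legendre n).eval ((2 * x - a - b) / (b - a))) := by
    apply Continuous.mul continuous_const
    exact (legendre n).continuous_aeval.comp (by fun_prop)
  have hCS := cauchy_schwarz_interval hab.le hg hg2 hφcont
  -- compute ∫ φ^2
  have harg : ∀ x : ℝ, (2 * x - a - b) / (b - a)
      = (2/(b-a)) * x + (-(a+b)/(b-a)) := by
    intro x; field_simp; ring
  have hsub : (∫ x in a..b, ((legendre n).eval ((2 * x - a - b) / (b - a))) ^ 2)
      = (b - a) / (2 * (n:ℝ) + 1) := by
    simp_rw [harg]
    have h2ba : (2:ℝ)/(b-a) ≠ 0 := by positivity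
    rw [intervalIntegral.integral_comp_mul_add
      (fun y => ((legendre n).eval y) ^ 2) h2ba (-(a+b)/(b-a))]
    have e1 : (2:ℝ)/(b-a) * a + (-(a+b)/(b-a)) = -1 := by field_simp; ring
    have e2 : (2:ℝ)/(b-a) * b + (-(a+b)/(b-a)) = 1 := by field_simp; ring
    rw [e1, e2, legendre_norm n, smul_eq_mul]
    have h2n : (2 * (n:ℝ) + 1) ≠ 0 := by positivity
    field_simp
  have hφ2 : (∫ x in a..b,
      (c * (legendre n).eval ((2 * x - a - b) / (b - a))) ^ 2)
      = c ^ 2 * ((b - a) / (2 * (n:ℝ) + 1)) := by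
    simp_rw [mul_pow]
    rw [intervalIntegral.integral_const_mul, hsub]
  rw [hφ2] at hCS
  -- simplify the power
  have hT : (c ^ 2 * ((b - a) / (2 * (n:ℝ) + 1))) ^ ((1:ℝ)/2)
      = c * ((b - a) ^ ((1:ℝ)/2) / (2 * (n:ℝ) + 1) ^ ((1:ℝ)/2)) := by
    rw [Real.mul_rpow (sq_nonneg c) (by positivity),
        Real.div_rpow hba.le (by positivity)]
    congr 1
    rw [← Real.rpow_natCast c 2, ← Real.rpow_mul hcpos.le]
    norm_num
  rw [hT] at hCS
  set S : ℝ := (∫ x in a..b, (g x) ^ 2) ^ ((1:ℝ)/2) with hS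
  have hSnn : 0 ≤ S := Real.rpow_nonneg
    (intervalIntegral.integral_nonneg hab.le (fun x _ => sq_nonneg _)) _
  have habs : |((-1 : ℝ) ^ n / n.factorial)| = 1 / (n.factorial : ℝ) := by
    rw [abs_div, abs_pow, abs_neg, abs_one, one_pow, abs_of_pos hfac]
  calc |((-1 : ℝ) ^ n / n.factorial) *
        ∫ x in a..b, g x * (c * (legendre n).eval ((2 * x - a - b) / (b - a)))|
      = (1 / (n.factorial : ℝ)) *
          |∫ x in a..b, g x * (c * (legendre n).eval ((2 * x - a - b) / (b - a)))| := by
        rw [abs_mul, habs]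
    _ ≤ (1 / (n.factorial : ℝ)) * (S * (c * ((b - a) ^ ((1:ℝ)/2) / (2 * (n:ℝ) + 1) ^ ((1:ℝ)/2)))) := by
        apply mul_le_mul_of_nonneg_left hCS (by positivity)
    _ = S * (n.factorial : ℝ) * (b - a) ^ ((n : ℝ) + 1 / 2) /
          ((2 * (n : ℝ) + 1) ^ ((1 : ℝ) / 2) * ((2 * n).factorial : ℝ)) := by
        have hpow : (b - a) ^ ((n : ℝ) + 1/2) = (b - a) ^ n * (b - a) ^ ((1:ℝ)/2) := by
          rw [Real.rpow_add hba, Real.rpow_natCast]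
        have h2pow : ((b-a)/2)^n * (2:ℝ)^n = (b-a)^n := by
          rw [← mul_pow, div_mul_cancel₀]; norm_num
        have hq : (0:ℝ) < (2 * (n:ℝ) + 1) ^ ((1:ℝ)/2) := Real.rpow_pos_of_pos (by positivity) _
        rw [hpow, hc]
        field_simp
        ring_nf
        rw [← h2pow]; ring
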